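/- Let σ and σ' be crossingless matchings of 2n points which meet in codimension one, i.e. c(σ, σ') = n − 1. Then for every crossingless matching τ of 2n points, the codimension of intersection changes by exactly one: either c(σ, τ) = c(σ', τ) + 1 or c(σ', τ) = c(σ, τ) + 1. -/

import Mathlib

/-- A crossingless matching of the `m` points `0, …, m-1` (identified in order with the
labels `1, …, m`), encoded as a permutation: a fixed-point-free noncrossing involution. -/
def IsCrossinglessMatching {m : ℕ} (σ : Equiv.Perm (Fin m)) : Prop :=
  (∀ i, σ (σ i) = i) ∧ (∀ i, σ i ≠ i) ∧
    ∀ a b : Fin m, a < b → b < σ a → σ a < σ b → False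

/-- `c(σ, τ)`: the number of components of the planar unlink `σ ∪ τ̄`, i.e. the number of
orbits of the action on `Fin m` of the subgroup generated by `σ` and `τ`. -/
noncomputable def numComponents {m : ℕ} (σ τ : Equiv.Perm (Fin m)) : ℕ :=
  Nat.card (MulAction.orbitRel.Quotient
    ↥(Subgroup.closure ({σ, τ} : Set (Equiv.Perm (Fin m)))) (Fin m))

namespace CLM
open Equiv Equiv.Perm

/-- even cardinality from a fixed-point-free involution on a finset -/
lemma even_card_of_invol {α : Type*} [DecidableEq α] (f : α → α)
    (hinv : ∀ x, f (f x) = x) :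
    ∀ s : Finset α, (∀ x ∈ s, f x ∈ s) → (∀ x ∈ s, f x ≠ x) → Even s.card := by
  intro s
  induction s using Finset.strongInduction with
  | _ s ih =>
    rcases s.eq_empty_or_nonempty with rfl | ⟨x, hx⟩
    · simp
    · intro hmaps hfix
      set t := (s.erase x).erase (f x) with ht
      have hfxs : f x ∈ s.erase x := Finset.mem_erase.2 ⟨hfix x hx, hmaps x hx⟩
      have htsub : t ⊂ s := by
        refine Finset.ssubset_of_subset_of_ssubset ?_ (Finset.erase_ssubset hx)
        exact Finset.erase_subset _ _
      have hmem : ∀ y, y ∈ t ↔ y ∈ s ∧ y ≠ x ∧ y ≠ f x := by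
        intro y; simp [ht, Finset.mem_erase]; tauto
      have hT : Even t.card := by
        refine ih t htsub ?_ ?_
        · intro y hy
          rcases (hmem y).1 hy with ⟨hys, hyx, hyfx⟩
          refine (hmem (f y)).2 ⟨hmaps y hys, ?_, ?_⟩
          · intro h; apply hyfx; rw [← h, hinv]
          · intro h; exact hyx (by simpa [hinv] using congrArg f h)
        · intro y hy; exact hfix y ((hmem y).1 hy).1
      have hcard : s.card = t.card + 2 := by
        have h1 : (s.erase x).card = t.card + 1 := by
          rw [ht]; rw [Finset.card_erase_add_one hfxs]
        have h2 : s.card = (s.erase x).card + 1 := by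
          rw [Finset.card_erase_add_one hx]
        omega
      rcases hT with ⟨k, hk⟩
      exact ⟨k + 1, by omega⟩

def par {m : ℕ} (i : Fin m) : ZMod 2 := ((i : ℕ) : ZMod 2)

lemma par_eq_iff {m : ℕ} (i j : Fin m) : par i = par j ↔ (i : ℕ) % 2 = (j : ℕ) % 2 := by
  unfold par
  rw [ZMod.natCast_eq_natCast_iff]
  unfold Nat.ModEq
  rfl

/-- P1: a crossingless matching flips parity -/
lemma par_flip {m : ℕ} {σ : Equiv.Perm (Fin m)} (h : IsCrossinglessMatching σ) (i : Fin m) :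
    par (σ i) ≠ par i := by
  obtain ⟨hinv, hfpf, hnc⟩ := h
  -- wlog i < σ i
  suffices H : ∀ a b : Fin m, σ a = b → a < b → par b ≠ par a by
    rcases lt_or_gt_of_ne (hfpf i) with hlt | hgt
    · exact Ne.symm (H (σ i) i (hinv i) hlt)
    · exact H i (σ i) rfl hgt
  intro a b hab hlt
  -- the set of points strictly between a and b is preserved by σ
  have hmaps : ∀ x ∈ Finset.Ioo a b, σ x ∈ Finset.Ioo a b := by
    intro x hx
    rw [Finset.mem_Ioo] at hx ⊢
    obtain ⟨hax, hxb⟩ := hx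
    have hxa : x ≠ a := ne_of_gt hax
    have hsxa : σ x ≠ a := by
      intro h
      have : x = σ a := by rw [← h, hinv]
      rw [hab] at this; exact absurd this (ne_of_lt hxb)
    have hsxb : σ x ≠ b := by
      intro h
      have : x = σ b := by rw [← h, hinv]
      have hba : σ b = a := by rw [← hab, hinv]
      rw [hba] at this; exact hxa this
    constructor
    · by_contra hle
      push_neg at hle
      have hlt2 : σ x < a := lt_of_le_of_ne hle hsxa
      have h2 : σ (σ x) = x := hinv x
      exact hnc (σ x) a hlt2 (by rw [h2]; exact hax) (by rw [h2, hab]; exact hxb)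
    · by_contra hle
      push_neg at hle
      have hlt2 : b < σ x := lt_of_le_of_ne hle (Ne.symm hsxb)
      exact hnc a x hax (by rw [hab]; exact hxb) (by rw [hab]; exact hlt2)
  have heven : Even (Finset.Ioo a b).card :=
    even_card_of_invol σ hinv _ hmaps (fun x _ => hfpf x)
  have hcard : (Finset.Ioo a b).card = (b : ℕ) - (a : ℕ) - 1 := by
    rw [Fin.card_Ioo]
  have hab' : (a : ℕ) < (b : ℕ) := hlt
  rw [hcard] at heven
  obtain ⟨k, hk⟩ := heven
  rw [Ne, par_eq_iff]
  omega


variable {α : Type*} [DecidableEq α] [Finite α]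

lemma sc_iff_nat {f : Perm α} {x y : α} :
    f.SameCycle x y ↔ ∃ i : ℕ, (f ^ i) x = y := by
  constructor
  · intro h
    obtain ⟨i, _, hi⟩ := h.exists_pow_eq'
    exact ⟨i, hi⟩
  · rintro ⟨i, hi⟩
    exact ⟨(i : ℤ), by rwa [zpow_natCast]⟩

/-- (A): multiplying by `swap a b` joins `a` and `b` when they are in different cycles -/
lemma sameCycle_swap_mul {π : Perm α} {a b : α} (hab : a ≠ b) (h : ¬ π.SameCycle a b) :
    (Equiv.swap a b * π).SameCycle a b := by
  have hex : ∃ j, 0 < j ∧ (π ^ j) a = a := by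
    refine ⟨orderOf π, orderOf_pos π, ?_⟩
    rw [pow_orderOf_eq_one]; rfl
  classical
  set k := Nat.find hex with hk
  clear_value k
  obtain ⟨hk0, hka⟩ := Nat.find_spec hex
  rw [← hk] at hk0 hka
  have key : ∀ j, j < k → ((Equiv.swap a b * π) ^ j) a = (π ^ j) a := by
    intro j
    induction j with
    | zero => simp
    | succ j ih =>
      intro hj
      have hj' : j < k := Nat.lt_of_succ_lt hj
      rw [pow_succ', pow_succ', Equiv.Perm.mul_apply, Equiv.Perm.mul_apply, ih hj']
      have h1 : (π ^ (j + 1)) a ≠ a := by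
        intro he
        exact Nat.find_min hex (by omega) ⟨Nat.succ_pos j, he⟩
      have h2 : (π ^ (j + 1)) a ≠ b := by
        intro he
        exact h ⟨((j : ℕ) + 1 : ℕ), by rwa [zpow_natCast]⟩
      rw [pow_succ', Equiv.Perm.mul_apply] at h1 h2
      exact Equiv.swap_apply_of_ne_of_ne h1 h2
  refine sc_iff_nat.2 ⟨k, ?_⟩
  obtain ⟨k', rfl⟩ : ∃ k', k = k' + 1 := ⟨k - 1, by omega⟩
  rw [pow_succ', Equiv.Perm.mul_apply, key k' (by omega)]
  rw [pow_succ', Equiv.Perm.mul_apply] at hka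
  rw [Equiv.Perm.mul_apply, hka, Equiv.swap_apply_left]

/-- (B): multiplying by `swap a b` separates `a` and `b` when they are in the same cycle -/
lemma not_sameCycle_swap_mul {π : Perm α} {a b : α} (hab : a ≠ b) (h : π.SameCycle a b) :
    ¬ (Equiv.swap a b * π).SameCycle a b := by
  classical
  have hex : ∃ j, 0 < j ∧ (π ^ j) a = b := by
    obtain ⟨i, hi⟩ := sc_iff_nat.1 h
    refine ⟨i, ?_, hi⟩
    rcases Nat.eq_zero_or_pos i with rfl | hpos
    · simp at hi; exact absurd hi hab
    · exact hpos
  set m := Nat.find hex with hm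
  obtain ⟨hm0, hmb⟩ := Nat.find_spec hex
  set S := (Finset.range m).image (fun j => (π ^ j) a) with hS
  have haS : a ∈ S := Finset.mem_image.2 ⟨0, Finset.mem_range.2 hm0, by simp⟩
  have hbS : b ∉ S := by
    intro hb
    obtain ⟨j, hj, hjb⟩ := Finset.mem_image.1 hb
    rw [Finset.mem_range] at hj
    rcases Nat.eq_zero_or_pos j with rfl | hpos
    · simp at hjb; exact hab hjb
    · exact Nat.find_min hex hj ⟨hpos, hjb⟩
  have hmaps : ∀ x ∈ S, (Equiv.swap a b * π) x ∈ S := by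
    intro x hx
    obtain ⟨j, hj, rfl⟩ := Finset.mem_image.1 hx
    rw [Finset.mem_range] at hj
    rw [Equiv.Perm.mul_apply]
    have hy : π ((π ^ j) a) = (π ^ (j + 1)) a := by
      rw [pow_succ', Equiv.Perm.mul_apply]
    rw [hy]
    by_cases hyb : (π ^ (j + 1)) a = b
    · rw [hyb, Equiv.swap_apply_right]; exact haS
    · have hj1 : j + 1 < m := by
        rcases Nat.lt_or_ge (j+1) m with h1 | h1
        · exact h1
        · have : j + 1 = m := by omega
          rw [this] at hyb; exact absurd hmb hyb
      have hya : (π ^ (j + 1)) a ≠ a := by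
        intro he
        have hcomp : (π ^ (m - (j + 1))) ((π ^ (j + 1)) a) = (π ^ m) a := by
          rw [← Equiv.Perm.mul_apply, ← pow_add]
          congr 2
          omega
        rw [he] at hcomp
        have : 0 < m - (j+1) ∧ (π ^ (m - (j+1))) a = b := ⟨by omega, by rw [hcomp]; exact hmb⟩
        exact Nat.find_min hex (by omega) this
      rw [Equiv.swap_apply_of_ne_of_ne hya hyb]
      exact Finset.mem_image.2 ⟨j + 1, Finset.mem_range.2 hj1, rfl⟩
  have horb : ∀ j : ℕ, ((Equiv.swap a b * π) ^ j) a ∈ S := by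
    intro j
    induction j with
    | zero => simpa using haS
    | succ j ih =>
      rw [pow_succ', Equiv.Perm.mul_apply]
      exact hmaps _ ih
  intro hsc
  obtain ⟨i, hi⟩ := sc_iff_nat.1 hsc
  rw [← hi] at hbS
  exact hbS (horb i)

section Merge

variable {π : Perm α} {a b : α}

/-- each cycle of `π` is contained in a cycle of `swap a b * π` -/
lemma sc_mono (hab : a ≠ b) (hnsc : ¬ π.SameCycle a b) {x y : α}
    (h : π.SameCycle x y) : (Equiv.swap a b * π).SameCycle x y := by
  have hstep : ∀ z : α, (Equiv.swap a b * π).SameCycle z (π z) := by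
    intro z
    by_cases hza : π z = a
    · have h1 : (Equiv.swap a b * π) z = b := by
        rw [Equiv.Perm.mul_apply, hza, Equiv.swap_apply_left]
      have h2 : (Equiv.swap a b * π).SameCycle z b := by
        have h3 := Equiv.Perm.sameCycle_apply_right.2 (Equiv.Perm.SameCycle.refl (Equiv.swap a b * π) z)
        rwa [h1] at h3
      rw [hza]
      exact h2.trans (sameCycle_swap_mul hab hnsc).symm
    · by_cases hzb : π z = b
      · have h1 : (Equiv.swap a b * π) z = a := by
          rw [Equiv.Perm.mul_apply, hzb, Equiv.swap_apply_right]
        have h2 : (Equiv.swap a b * π).SameCycle z a := by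
          have h3 := Equiv.Perm.sameCycle_apply_right.2 (Equiv.Perm.SameCycle.refl (Equiv.swap a b * π) z)
          rwa [h1] at h3
        rw [hzb]
        exact h2.trans (sameCycle_swap_mul hab hnsc)
      · have h1 : (Equiv.swap a b * π) z = π z := by
          rw [Equiv.Perm.mul_apply, Equiv.swap_apply_of_ne_of_ne hza hzb]
        have h3 := Equiv.Perm.sameCycle_apply_right.2 (Equiv.Perm.SameCycle.refl (Equiv.swap a b * π) z)
        rwa [h1] at h3
  obtain ⟨k, hk⟩ := sc_iff_nat.1 h
  rw [← hk]
  clear hk h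
  induction k with
  | zero => exact Equiv.Perm.SameCycle.refl _ _
  | succ k ih =>
    rw [pow_succ', Equiv.Perm.mul_apply]
    exact ih.trans (hstep _)

/-- the merged relation -/
def MR (π : Perm α) (a b x y : α) : Prop :=
  π.SameCycle x y ∨ (π.SameCycle x a ∧ π.SameCycle b y) ∨ (π.SameCycle x b ∧ π.SameCycle a y)

lemma sc_swap_mul_iff (hab : a ≠ b) (hnsc : ¬ π.SameCycle a b) {x y : α} :
    (Equiv.swap a b * π).SameCycle x y ↔ MR π a b x y := by
  constructor
  · intro h
    have hstep : ∀ z : α, MR π a b x z → MR π a b x ((Equiv.swap a b * π) z) := by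
      intro z hz
      by_cases hza : π z = a
      · have h1 : (Equiv.swap a b * π) z = b := by
          rw [Equiv.Perm.mul_apply, hza, Equiv.swap_apply_left]
        rw [h1]
        rcases hz with h2 | ⟨h2, h3⟩ | ⟨h2, h3⟩
        · exact Or.inr (Or.inl ⟨hza ▸ h2.apply_right, Equiv.Perm.SameCycle.refl _ _⟩)
        · exact absurd (hza ▸ h3.apply_right).symm hnsc
        · exact Or.inl h2
      · by_cases hzb : π z = b
        · have h1 : (Equiv.swap a b * π) z = a := by
            rw [Equiv.Perm.mul_apply, hzb, Equiv.swap_apply_right]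
          rw [h1]
          rcases hz with h2 | ⟨h2, h3⟩ | ⟨h2, h3⟩
          · exact Or.inr (Or.inr ⟨hzb ▸ h2.apply_right, Equiv.Perm.SameCycle.refl _ _⟩)
          · exact Or.inl h2
          · exact absurd (hzb ▸ h3.apply_right) hnsc
        · have h1 : (Equiv.swap a b * π) z = π z := by
            rw [Equiv.Perm.mul_apply, Equiv.swap_apply_of_ne_of_ne hza hzb]
          rw [h1]
          rcases hz with h2 | ⟨h2, h3⟩ | ⟨h2, h3⟩
          · exact Or.inl h2.apply_right
          · exact Or.inr (Or.inl ⟨h2, h3.apply_right⟩)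
          · exact Or.inr (Or.inr ⟨h2, h3.apply_right⟩)
    obtain ⟨k, hk⟩ := sc_iff_nat.1 h
    rw [← hk]
    clear hk h
    induction k with
    | zero => exact Or.inl (Equiv.Perm.SameCycle.refl _ _)
    | succ k ih =>
      rw [pow_succ', Equiv.Perm.mul_apply]
      exact hstep _ ih
  · rintro (h | ⟨h1, h2⟩ | ⟨h1, h2⟩)
    · exact sc_mono hab hnsc h
    · exact ((sc_mono hab hnsc h1).trans (sameCycle_swap_mul hab hnsc)).trans (sc_mono hab hnsc h2)
    · exact ((sc_mono hab hnsc h1).trans (sameCycle_swap_mul hab hnsc).symm).trans (sc_mono hab hnsc h2)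

/-- number of cycles (fixed points included) -/
noncomputable def cyc (f : Perm α) : ℕ := Nat.card (Quotient (Equiv.Perm.SameCycle.setoid f))

lemma card_ne_add_one {β : Type*} [Finite β] (x : β) :
    Nat.card {y : β // y ≠ x} + 1 = Nat.card β := by
  classical
  have h1 : Nat.card β = Nat.card ({y : β // y = x} ⊕ {y : β // ¬ y = x}) :=
    Nat.card_congr (Equiv.sumCompl (fun y : β => y = x)).symm
  rw [h1, Nat.card_sum]
  have h2 : Nat.card {y : β // y = x} = 1 := by
    have : Unique {y : β // y = x} := ⟨⟨⟨x, rfl⟩⟩, by rintro ⟨y, rfl⟩; rfl⟩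
    exact Nat.card_unique
  have h3 : Nat.card {y : β // ¬ y = x} = Nat.card {y : β // y ≠ x} := rfl
  rw [h2, h3]
  omega

/-- M2: merging two distinct cycles drops the cycle count by one -/
lemma cyc_swap_mul (hab : a ≠ b) (hnsc : ¬ π.SameCycle a b) :
    cyc π = cyc (Equiv.swap a b * π) + 1 := by
  classical
  set s1 := Equiv.Perm.SameCycle.setoid π with hs1
  set s2 := Equiv.Perm.SameCycle.setoid (Equiv.swap a b * π) with hs2
  have hr1 : ∀ x y : α, (Quotient.mk s1 x = Quotient.mk s1 y) ↔ π.SameCycle x y :=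
    fun x y => ⟨fun h => Quotient.exact h, fun h => Quotient.sound h⟩
  have hr2 : ∀ x y : α, (Quotient.mk s2 x = Quotient.mk s2 y) ↔ (Equiv.swap a b * π).SameCycle x y :=
    fun x y => ⟨fun h => Quotient.exact h, fun h => Quotient.sound h⟩
  set F : Quotient s1 → Quotient s2 :=
    Quotient.lift (fun x => Quotient.mk s2 x)
      (fun x y h => (hr2 x y).2 (sc_mono hab hnsc h)) with hF
  have hbij : Function.Bijective (fun q : {q : Quotient s1 // q ≠ Quotient.mk s1 b} => F q.1) := by
    constructor
    · rintro ⟨q1, hq1⟩ ⟨q2, hq2⟩ heq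
      obtain ⟨x, rfl⟩ := Quotient.exists_rep q1
      obtain ⟨y, rfl⟩ := Quotient.exists_rep q2
      simp only [hF] at heq
      have hxy : (Equiv.swap a b * π).SameCycle x y := (hr2 x y).1 heq
      rcases (sc_swap_mul_iff hab hnsc).1 hxy with h2 | ⟨h2, h3⟩ | ⟨h2, h3⟩
      · exact Subtype.ext ((hr1 x y).2 h2)
      · exact absurd ((hr1 y b).2 h3.symm) hq2
      · exact absurd ((hr1 x b).2 h2) hq1
    · intro q
      obtain ⟨z, rfl⟩ := Quotient.exists_rep q
      by_cases hz : π.SameCycle z b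
      · refine ⟨⟨Quotient.mk s1 a, fun h => hnsc ((hr1 a b).1 h)⟩, ?_⟩
        simp only [hF]
        exact (hr2 a z).2 ((sameCycle_swap_mul hab hnsc).trans (sc_mono hab hnsc hz).symm)
      · exact ⟨⟨Quotient.mk s1 z, fun h => hz ((hr1 z b).1 h)⟩, rfl⟩
  have hcard : Nat.card {q : Quotient s1 // q ≠ Quotient.mk s1 b} = Nat.card (Quotient s2) :=
    Nat.card_eq_of_bijective _ hbij
  have := card_ne_add_one (Quotient.mk s1 b)
  unfold cyc
  rw [← hs1, ← hs2, ← this, hcard]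

end Merge


section Key

variable {m : ℕ}

lemma zmod2_eq (a b c : ZMod 2) (h1 : a ≠ b) (h2 : c ≠ b) : a = c := by
  revert h1 h2; revert a b c; decide

lemma par_mul {u v : Equiv.Perm (Fin m)} (hpu : ∀ i, par (u i) ≠ par i)
    (hpv : ∀ i, par (v i) ≠ par i) (x : Fin m) : par ((u * v) x) = par x := by
  rw [Equiv.Perm.mul_apply]
  exact zmod2_eq _ _ _ (hpu (v x)) (hpv x).symm

lemma par_pow {ρ : Equiv.Perm (Fin m)} (h : ∀ x, par (ρ x) = par x) (k : ℕ) (x : Fin m) :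
    par ((ρ ^ k) x) = par x := by
  induction k with
  | zero => simp
  | succ k ih => rw [pow_succ', Equiv.Perm.mul_apply, h, ih]

lemma par_sc {ρ : Equiv.Perm (Fin m)} (h : ∀ x, par (ρ x) = par x) {x y : Fin m}
    (hsc : ρ.SameCycle x y) : par x = par y := by
  obtain ⟨k, hk⟩ := sc_iff_nat.1 hsc
  rw [← hk, par_pow h]

/-- multiplying by a far-away swap does not change same-cycle relations across parity -/
lemma sc_swap_mul_far {ρ : Equiv.Perm (Fin m)} (h : ∀ x, par (ρ x) = par x)
    {p r q s : Fin m} (hq : par q ≠ par p) (hs : par s ≠ par p) (hqs : par q = par s) :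
    (Equiv.swap q s * ρ).SameCycle p r ↔ ρ.SameCycle p r := by
  have hiter : ∀ (g : Equiv.Perm (Fin m)), (∀ x, par (g x) = par x) →
      ∀ k : ℕ, ((Equiv.swap q s * g) ^ k) p = (g ^ k) p := by
    intro g hg k
    induction k with
    | zero => simp
    | succ k ih =>
      rw [pow_succ', pow_succ', Equiv.Perm.mul_apply, Equiv.Perm.mul_apply, ih,
        Equiv.Perm.mul_apply]
      have h1 : par (g ((g ^ k) p)) = par p := by rw [hg, par_pow hg]
      refine Equiv.swap_apply_of_ne_of_ne ?_ ?_
      · intro he; rw [he] at h1; exact hq h1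
      · intro he; rw [he] at h1; exact hs h1
  have h1 : ∀ x, par ((Equiv.swap q s * ρ) x) = par x := by
    intro x
    rw [Equiv.Perm.mul_apply]
    rcases eq_or_ne (ρ x) q with he | hne1
    · rw [he, Equiv.swap_apply_left, ← hqs, ← he, h]
    · rcases eq_or_ne (ρ x) s with he2 | hne2
      · rw [he2, Equiv.swap_apply_right, hqs, ← he2, h]
      · rw [Equiv.swap_apply_of_ne_of_ne hne1 hne2, h]
  constructor
  · intro hsc
    obtain ⟨k, hk⟩ := sc_iff_nat.1 hsc
    rw [hiter ρ h k] at hk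
    exact sc_iff_nat.2 ⟨k, hk⟩
  · intro hsc
    obtain ⟨k, hk⟩ := sc_iff_nat.1 hsc
    have e1 : Equiv.swap q s * (Equiv.swap q s * ρ) = ρ := by
      rw [← mul_assoc, Equiv.swap_mul_self, one_mul]
    have := hiter (Equiv.swap q s * ρ) h1 k
    rw [e1, hk] at this
    exact sc_iff_nat.2 ⟨k, this.symm⟩

variable (u v : Equiv.Perm (Fin m))

/-- orbits of the group generated by two involutions vs cycles of their product -/
lemma key_orbit (hu : ∀ i, u (u i) = i) (hv : ∀ i, v (v i) = i) (x y : Fin m) :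
    y ∈ MulAction.orbit (Subgroup.closure ({u, v} : Set (Equiv.Perm (Fin m)))) x ↔
      ((u * v).SameCycle x y ∨ (u * v).SameCycle x (u y)) := by
  set H := Subgroup.closure ({u, v} : Set (Equiv.Perm (Fin m))) with hH
  set ρ := u * v with hρ
  have huH : u ∈ H := Subgroup.subset_closure (by simp)
  have hvH : v ∈ H := Subgroup.subset_closure (by simp)
  have hρH : ρ ∈ H := mul_mem huH hvH
  have hu1 : u * u = 1 := by ext z; simp [Equiv.Perm.mul_apply, hu z]
  have hv1 : v * v = 1 := by ext z; simp [Equiv.Perm.mul_apply, hv z]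
  have hui : u⁻¹ = u := inv_eq_of_mul_eq_one_right hu1
  have hvi : v⁻¹ = v := inv_eq_of_mul_eq_one_right hv1
  have hconj : u * ρ * u⁻¹ = ρ⁻¹ := by
    rw [hρ, hui, mul_inv_rev, hui, hvi, ← mul_assoc, hu1, one_mul]
  have scu1 : ∀ w z : Fin m, ρ.SameCycle w z → ρ.SameCycle (u w) (u z) := by
    intro w z h
    have h2 := h.conj (g := u)
    rw [hconj] at h2
    exact (Equiv.Perm.sameCycle_inv).1 h2
  have scu : ∀ w z : Fin m, ρ.SameCycle w z ↔ ρ.SameCycle (u w) (u z) := by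
    intro w z
    refine ⟨scu1 w z, fun h => ?_⟩
    have h2 := scu1 _ _ h
    rwa [hu w, hu z] at h2
  have mem1 : ∀ (g : Equiv.Perm (Fin m)), g ∈ H → ∀ z : Fin m,
      g z ∈ MulAction.orbit H z := fun g hg z => ⟨⟨g, hg⟩, rfl⟩
  set R : Fin m → Fin m → Prop := fun w z => ρ.SameCycle w z ∨ ρ.SameCycle w (u z) with hR
  have Rrefl : ∀ w, R w w := fun w => Or.inl (Equiv.Perm.SameCycle.refl _ _)
  have Rsymm : ∀ w z, R w z → R z w := by
    rintro w z (h | h)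
    · exact Or.inl h.symm
    · have h2 := (scu _ _).1 h
      rw [hu z] at h2
      exact Or.inr h2.symm
  have Rtrans : ∀ w z t, R w z → R z t → R w t := by
    rintro w z t (h1 | h1) (h2 | h2)
    · exact Or.inl (h1.trans h2)
    · exact Or.inr (h1.trans h2)
    · exact Or.inr (h1.trans ((scu _ _).1 h2))
    · have h3 := (scu _ _).1 h2
      rw [hu t] at h3
      exact Or.inl (h1.trans h3)
  constructor
  · rintro ⟨⟨g, hg⟩, rfl⟩
    have main : ∀ (g : Equiv.Perm (Fin m)), g ∈ H → ∀ z, R z (g z) := by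
      intro g hg
      induction hg using Subgroup.closure_induction with
      | mem w hw =>
        intro z
        rcases hw with h | h
        · subst h
          refine Or.inr ?_
          rw [hu z]
        · have hwv : w = v := h
          subst hwv
          refine Or.inr ?_
          show ρ.SameCycle z (ρ z)
          exact Equiv.Perm.sameCycle_apply_right.2 (Equiv.Perm.SameCycle.refl _ _)
      | one => intro z; simpa using Rrefl z
      | mul g' h' hg' hh' ihg ihh =>
        intro z
        have h1 : R z (h' z) := ihh z
        have h2 : R (h' z) (g' (h' z)) := ihg (h' z)
        have : (g' * h') z = g' (h' z) := rfl
        rw [this]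
        exact Rtrans _ _ _ h1 h2
      | inv g' hg' ihg =>
        intro z
        have h1 : R (g'⁻¹ z) (g' (g'⁻¹ z)) := ihg (g'⁻¹ z)
        rw [show g' (g'⁻¹ z) = z from g'.apply_symm_apply z] at h1
        exact Rsymm _ _ h1
    exact main g hg x
  · rintro (h | h)
    · obtain ⟨i, hi⟩ := h
      exact ⟨(⟨ρ, hρH⟩ : H) ^ i, by
        have : (((⟨ρ, hρH⟩ : H) ^ i : H) : Equiv.Perm (Fin m)) = ρ ^ i :=
          SubgroupClass.coe_zpow _ _
        show (((⟨ρ, hρH⟩ : H) ^ i : H) : Equiv.Perm (Fin m)) x = y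
        rw [this, hi]⟩
    · obtain ⟨i, hi⟩ := h
      have h1 : u y ∈ MulAction.orbit H x := ⟨(⟨ρ, hρH⟩ : H) ^ i, by
        have : (((⟨ρ, hρH⟩ : H) ^ i : H) : Equiv.Perm (Fin m)) = ρ ^ i :=
          SubgroupClass.coe_zpow _ _
        show (((⟨ρ, hρH⟩ : H) ^ i : H) : Equiv.Perm (Fin m)) x = u y
        rw [this, hi]⟩
      have h2 : y ∈ MulAction.orbit H (u y) := by
        have := mem1 u huH (u y)
        rwa [hu y] at this
      exact Setoid.trans' (MulAction.orbitRel H (Fin m)) h2 h1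

lemma cyc_eq_two_mul (hu : ∀ i, u (u i) = i) (hv : ∀ i, v (v i) = i)
    (hpu : ∀ i, par (u i) ≠ par i) (hpv : ∀ i, par (v i) ≠ par i) :
    cyc (u * v) = 2 * numComponents u v := by
  classical
  set H := Subgroup.closure ({u, v} : Set (Equiv.Perm (Fin m))) with hH
  set ρ := u * v with hρ
  have hpρ : ∀ x, par (ρ x) = par x := par_mul hpu hpv
  set s1 := Equiv.Perm.SameCycle.setoid ρ with hs1
  set St := MulAction.orbitRel H (Fin m) with hSt
  have huH : u ∈ H := Subgroup.subset_closure (by simp)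
  -- the bijection
  set Φ : Quotient s1 → Quotient St × ZMod 2 :=
    Quotient.lift (fun x => (Quotient.mk St x, par x)) (by
      intro x y (hxy : ρ.SameCycle x y)
      have h1 : Quotient.mk St x = Quotient.mk St y := by
        refine Quotient.sound ?_
        show x ∈ MulAction.orbit H y
        rw [key_orbit u v hu hv]
        exact Or.inl hxy.symm
      have h2 : par x = par y := par_sc hpρ hxy
      show (Quotient.mk St x, par x) = (Quotient.mk St y, par y)
      rw [h1, h2]) with hΦ
  have hbij : Function.Bijective Φ := by
    constructor
    · intro q1 q2
      obtain ⟨x, rfl⟩ := Quotient.exists_rep q1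
      obtain ⟨y, rfl⟩ := Quotient.exists_rep q2
      intro heq
      simp only [hΦ, Quotient.lift_mk, Prod.mk.injEq] at heq
      obtain ⟨horb, hpar⟩ := heq
      have h1 : x ∈ MulAction.orbit H y := Quotient.exact horb
      rw [key_orbit u v hu hv] at h1
      rcases h1 with h1 | h1
      · exact Quotient.sound h1.symm
      · exfalso
        have h3 := par_sc hpρ h1
        exact hpu x (by rw [← h3, hpar])
    · rintro ⟨ω, e⟩
      obtain ⟨x, rfl⟩ := Quotient.exists_rep ω
      by_cases hx : par x = e
      · exact ⟨Quotient.mk s1 x, by simp [hΦ, hx]⟩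
      · refine ⟨Quotient.mk s1 (u x), ?_⟩
        simp only [hΦ, Quotient.lift_mk, Prod.mk.injEq]
        constructor
        · refine Quotient.sound ?_
          show u x ∈ MulAction.orbit H x
          exact ⟨⟨u, huH⟩, rfl⟩
        · exact zmod2_eq _ _ _ (hpu x) (Ne.symm hx)
  have hcard := Nat.card_eq_of_bijective Φ hbij
  have hprod : Nat.card (Quotient St × ZMod 2) = Nat.card (Quotient St) * 2 := by
    rw [Nat.card_prod, Nat.card_zmod]
  unfold cyc
  rw [← hs1, hcard, hprod]
  unfold numComponents
  rw [← hH]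
  have : MulAction.orbitRel.Quotient H (Fin m) = Quotient St := rfl
  rw [this]
  ring

end Key

section Surgery
variable {m : ℕ}

lemma surgery_step (σ σ' τ : Equiv.Perm (Fin m))
    (hσ : IsCrossinglessMatching σ) (hσ' : IsCrossinglessMatching σ')
    (hτ : IsCrossinglessMatching τ) (p q r s : Fin m)
    (hpq : p ≠ q) (hpr : p ≠ r) (hps : p ≠ s) (hqr : q ≠ r) (hqs : q ≠ s) (hrs : r ≠ s)
    (hσp : σ p = q) (hσr : σ r = s)
    (hform : σ' = Equiv.swap p r * (Equiv.swap q s * σ)) :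
    numComponents σ' τ = numComponents σ τ + 1 ∨
      numComponents σ τ = numComponents σ' τ + 1 := by
  classical
  obtain ⟨hσi, hσf, -⟩ := id hσ
  obtain ⟨hτi, hτf, -⟩ := id hτ
  obtain ⟨hσ'i, hσ'f, -⟩ := id hσ'
  set ρ := σ * τ with hρ
  set ρ' := σ' * τ with hρ'def
  have hρ'form : ρ' = Equiv.swap p r * (Equiv.swap q s * ρ) := by
    rw [hρ'def, hform, hρ, mul_assoc, mul_assoc]
  have hσq : σ q = p := by rw [← hσp, hσi]
  have hσs : σ s = r := by rw [← hσr, hσi]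
  have hσ'q : σ' q = r := by
    rw [hform]
    simp only [Equiv.Perm.mul_apply]
    rw [hσq, Equiv.swap_apply_of_ne_of_ne hpq hps, Equiv.swap_apply_left]
  -- parities
  have hq_p : par q ≠ par p := by rw [← hσp]; exact par_flip hσ p
  have hs_r : par s ≠ par r := by rw [← hσr]; exact par_flip hσ r
  have hr_q : par r ≠ par q := by rw [← hσ'q]; exact par_flip hσ' q
  have hpar_pr : par p = par r := zmod2_eq _ _ _ (Ne.symm hq_p) hr_q
  have hpar_qs : par q = par s := zmod2_eq _ _ _ hr_q.symm hs_r
  have hs_p : par s ≠ par p := by rw [← hpar_qs]; exact hq_p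
  have hpρ : ∀ x, par (ρ x) = par x := par_mul (par_flip hσ) (par_flip hτ)
  -- same-cycle p r iff same-cycle q s
  have hiff : ρ.SameCycle p r ↔ ρ.SameCycle q s := by
    set H := Subgroup.closure ({σ, τ} : Set (Equiv.Perm (Fin m))) with hH
    have hσH : σ ∈ H := Subgroup.subset_closure (by simp)
    have h1 : ρ.SameCycle p r ↔ r ∈ MulAction.orbit H p := by
      rw [key_orbit σ τ hσi hτi]
      constructor
      · exact Or.inl
      · rintro (h | h)
        · exact h
        · exfalso
          rw [hσr] at h
          have := par_sc hpρ h
          exact hs_p this.symm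
    have h2 : ρ.SameCycle q s ↔ s ∈ MulAction.orbit H q := by
      rw [key_orbit σ τ hσi hτi]
      constructor
      · exact Or.inl
      · rintro (h | h)
        · exact h
        · exfalso
          rw [hσs] at h
          have := par_sc hpρ h
          rw [← hpar_pr] at this
          exact hq_p this
    rw [h1, h2]
    have hqp : q ∈ MulAction.orbit H p := by
      have : σ p ∈ MulAction.orbit H p := ⟨⟨σ, hσH⟩, rfl⟩
      rwa [hσp] at this
    have hsr : s ∈ MulAction.orbit H r := by
      have : σ r ∈ MulAction.orbit H r := ⟨⟨σ, hσH⟩, rfl⟩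
      rwa [hσr] at this
    have T : ∀ a b c : Fin m, a ∈ MulAction.orbit H b → b ∈ MulAction.orbit H c →
        a ∈ MulAction.orbit H c :=
      fun a b c h1 h2 => Setoid.trans' (MulAction.orbitRel H (Fin m)) h1 h2
    have S : ∀ a b : Fin m, a ∈ MulAction.orbit H b → b ∈ MulAction.orbit H a :=
      fun a b h => Setoid.symm' (MulAction.orbitRel H (Fin m)) h
    constructor
    · intro h
      exact T s r q hsr (T r p q h (S q p hqp))
    · intro h
      exact T r s p (S s r hsr) (T s q p h hqp)
  have hfar : ∀ w z : Fin m, (Equiv.swap q s * ρ).SameCycle p r ↔ ρ.SameCycle p r :=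
    fun _ _ => sc_swap_mul_far hpρ hq_p hs_p hpar_qs
  have c2σ : cyc ρ = 2 * numComponents σ τ := cyc_eq_two_mul σ τ hσi hτi (par_flip hσ) (par_flip hτ)
  have c2σ' : cyc ρ' = 2 * numComponents σ' τ :=
    cyc_eq_two_mul σ' τ hσ'i hτi (par_flip hσ') (par_flip hτ)
  by_cases hsc : ρ.SameCycle q s
  · -- split case : both cycle counts go up
    left
    have h1 : ¬ (Equiv.swap q s * ρ).SameCycle q s := not_sameCycle_swap_mul hqs hsc
    have e1 : Equiv.swap q s * (Equiv.swap q s * ρ) = ρ := by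
      rw [← mul_assoc, Equiv.swap_mul_self, one_mul]
    have c1 : cyc (Equiv.swap q s * ρ) = cyc ρ + 1 := by
      have := cyc_swap_mul hqs h1
      rwa [e1] at this
    have hsc1 : (Equiv.swap q s * ρ).SameCycle p r := (hfar p r).2 (hiff.2 hsc)
    have h2 : ¬ ρ'.SameCycle p r := by
      rw [hρ'form]
      exact not_sameCycle_swap_mul hpr hsc1
    have e2 : Equiv.swap p r * ρ' = Equiv.swap q s * ρ := by
      rw [hρ'form, ← mul_assoc, Equiv.swap_mul_self, one_mul]
    have c2 : cyc ρ' = cyc (Equiv.swap q s * ρ) + 1 := by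
      have := cyc_swap_mul hpr h2
      rwa [e2] at this
    omega
  · -- merge case : both cycle counts go down
    right
    have c1 : cyc ρ = cyc (Equiv.swap q s * ρ) + 1 := cyc_swap_mul hqs hsc
    have hn1 : ¬ (Equiv.swap q s * ρ).SameCycle p r := by
      rw [hfar p r]
      intro h
      exact hsc (hiff.1 h)
    have c2 : cyc (Equiv.swap q s * ρ) = cyc ρ' + 1 := by
      have := cyc_swap_mul hpr hn1
      rwa [← hρ'form] at this
    omega

/-- PART I: a codimension-one pair of matchings differ by a surgery on two arcs -/
lemma exists_surgery (σ σ' : Equiv.Perm (Fin m))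
    (hσi : ∀ i, σ (σ i) = i) (hσf : ∀ i, σ i ≠ i)
    (hσ'i : ∀ i, σ' (σ' i) = i) (hσ'f : ∀ i, σ' i ≠ i)
    (hcount : 2 * (numComponents σ σ' + 1) = m) :
    ∃ p q r s : Fin m, p ≠ q ∧ p ≠ r ∧ p ≠ s ∧ q ≠ r ∧ q ≠ s ∧ r ≠ s ∧
      σ p = q ∧ σ r = s ∧ σ' = Equiv.swap p r * (Equiv.swap q s * σ) := by
  classical
  set H := Subgroup.closure ({σ, σ'} : Set (Equiv.Perm (Fin m))) with hH
  set St := MulAction.orbitRel H (Fin m) with hSt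
  have hσH : σ ∈ H := Subgroup.subset_closure (by simp)
  have hσ'H : σ' ∈ H := Subgroup.subset_closure (by simp)
  have hQfin : Finite (Quotient St) := Quotient.finite St
  have hQfin' : Fintype (Quotient St) := Fintype.ofFinite _
  set mk : Fin m → Quotient St := fun x => Quotient.mk St x with hmk
  have horb : ∀ (g : Equiv.Perm (Fin m)), g ∈ H → ∀ x : Fin m, mk (g x) = mk x := by
    intro g hg x
    exact Quotient.sound (⟨⟨g, hg⟩, rfl⟩ : g x ∈ MulAction.orbit H x)
  set fib : Quotient St → Finset (Fin m) := fun ω => Finset.univ.filter (fun x => mk x = ω)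
    with hfib
  have hmemfib : ∀ x ω, x ∈ fib ω ↔ mk x = ω := by
    intro x ω; simp [hfib]
  have hsum : ∑ ω : Quotient St, (fib ω).card = m := by
    have h1 : (Finset.univ : Finset (Fin m)).card =
        ∑ ω ∈ (Finset.univ : Finset (Quotient St)), (Finset.univ.filter (fun x => mk x = ω)).card :=
      Finset.card_eq_sum_card_fiberwise (fun x _ => Finset.mem_univ (mk x))
    rw [Finset.card_univ, Fintype.card_fin] at h1
    exact h1.symm
  have heven : ∀ ω, Even (fib ω).card := by
    intro ω
    refine even_card_of_invol σ hσi (fib ω) ?_ (fun x _ => hσf x)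
    intro x hx
    rw [hmemfib] at hx ⊢
    rw [horb σ hσH x, hx]
  have hfib2 : ∀ ω, 2 ≤ (fib ω).card := by
    intro ω
    obtain ⟨x, hx⟩ := Quotient.exists_rep ω
    have hx1 : x ∈ fib ω := (hmemfib _ _).2 hx
    have hx2 : σ x ∈ fib ω := (hmemfib _ _).2 (by rw [horb σ hσH x]; exact hx)
    have h1 : 1 < (fib ω).card := Finset.one_lt_card.2 ⟨σ x, hx2, x, hx1, hσf x⟩
    omega
  have hN : numComponents σ σ' = Fintype.card (Quotient St) := by
    unfold numComponents
    rw [← hH]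
    have h1 : Nat.card (MulAction.orbitRel.Quotient H (Fin m)) = Nat.card (Quotient St) := rfl
    rw [h1, Nat.card_eq_fintype_card]
  set N := Fintype.card (Quotient St) with hNdef
  have htot : ∑ ω : Quotient St, (fib ω).card = 2 * N + 2 := by
    rw [hsum]; omega
  have hsum_t : ∑ ω : Quotient St, ((fib ω).card - 2) = 2 := by
    have h1 : ∀ ω ∈ (Finset.univ : Finset (Quotient St)),
        (fib ω).card = ((fib ω).card - 2) + 2 := fun ω _ => by have := hfib2 ω; omega
    rw [Finset.sum_congr rfl h1, Finset.sum_add_distrib, Finset.sum_const,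
      Finset.card_univ, smul_eq_mul, ← hNdef] at htot
    omega
  obtain ⟨ω₀, hω₀⟩ : ∃ ω₀ : Quotient St, (fib ω₀).card - 2 ≠ 0 := by
    by_contra hno
    push_neg at hno
    rw [Finset.sum_eq_zero (fun ω _ => hno ω)] at hsum_t
    omega
  have hle : (fib ω₀).card - 2 ≤ 2 := by
    have h1 : (fib ω₀).card - 2 ≤ ∑ ω : Quotient St, ((fib ω).card - 2) :=
      Finset.single_le_sum (f := fun ω => (fib ω).card - 2)
        (fun ω _ => Nat.zero_le _) (Finset.mem_univ ω₀)
    omega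
  have hc4 : (fib ω₀).card = 4 := by
    obtain ⟨k, hk⟩ := heven ω₀
    omega
  have hrest : ∀ ω, ω ≠ ω₀ → (fib ω).card = 2 := by
    intro ω hω
    have h2 : (fib ω₀).card - 2 + ∑ ω' ∈ Finset.univ.erase ω₀, ((fib ω').card - 2) =
        ∑ ω' : Quotient St, ((fib ω').card - 2) :=
      Finset.add_sum_erase Finset.univ (fun ω' => (fib ω').card - 2) (Finset.mem_univ ω₀)
    have h1 : ∑ ω' ∈ Finset.univ.erase ω₀, ((fib ω').card - 2) = 0 := by omega
    have h3 := (Finset.sum_eq_zero_iff.1 h1) ω (Finset.mem_erase.2 ⟨hω, Finset.mem_univ ω⟩)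
    have := hfib2 ω
    omega
  obtain ⟨x₀, hx₀⟩ := Quotient.exists_rep ω₀
  have hx₀f : x₀ ∈ fib ω₀ := (hmemfib _ _).2 hx₀
  have hmσ : ∀ y, y ∈ fib ω₀ → σ y ∈ fib ω₀ := fun y hy =>
    (hmemfib _ _).2 (by rw [horb σ hσH]; exact (hmemfib _ _).1 hy)
  have hmσ' : ∀ y, y ∈ fib ω₀ → σ' y ∈ fib ω₀ := fun y hy =>
    (hmemfib _ _).2 (by rw [horb σ' hσ'H]; exact (hmemfib _ _).1 hy)
  have hne : σ' x₀ ≠ σ x₀ := by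
    intro heq
    have hinv : ∀ (g : Equiv.Perm (Fin m)), g ∈ H →
        ∀ z, (z = x₀ ∨ z = σ x₀) ↔ (g z = x₀ ∨ g z = σ x₀) := by
      intro g hg
      induction hg using Subgroup.closure_induction with
      | mem w hw =>
        intro z
        rcases hw with h | h
        · subst h
          constructor
          · rintro (rfl | rfl)
            · exact Or.inr rfl
            · exact Or.inl (hσi x₀)
          · rintro (h1 | h1)
            · right
              have h2 := congrArg w h1
              rw [hσi] at h2
              rw [h2]
            · left
              have h2 := congrArg w h1
              rw [hσi, hσi] at h2
              exact h2
        · have hwv : w = σ' := h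
          subst hwv
          constructor
          · rintro (rfl | rfl)
            · exact Or.inr heq
            · left
              rw [← heq, hσ'i]
          · rintro (h1 | h1)
            · right
              have h2 := congrArg w h1
              rw [hσ'i] at h2
              rw [h2, heq]
            · left
              have h2 := congrArg w h1
              rw [hσ'i, ← heq, hσ'i] at h2
              exact h2
      | one => intro z; exact Iff.rfl
      | mul g' h' hg' hh' ihg ihh =>
        intro z
        rw [show (g' * h') z = g' (h' z) from rfl]
        exact (ihh z).trans (ihg (h' z))
      | inv g' hg' ihg =>
        intro z
        have h1 := ihg (g'⁻¹ z)
        rw [show g' (g'⁻¹ z) = z from g'.apply_symm_apply z] at h1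
        exact h1.symm
    have hsub : fib ω₀ ⊆ ({x₀, σ x₀} : Finset (Fin m)) := by
      intro y hy
      have h1 : mk y = mk x₀ := by rw [(hmemfib _ _).1 hy, ← hx₀]
      have h2 : y ∈ MulAction.orbit H x₀ := Quotient.exact h1
      obtain ⟨⟨g, hg⟩, rfl⟩ := h2
      have h3 := (hinv g hg x₀).1 (Or.inl rfl)
      rw [Finset.mem_insert, Finset.mem_singleton]
      exact h3
    have h4 : (fib ω₀).card ≤ 2 := by
      refine le_trans (Finset.card_le_card hsub) ?_
      refine le_trans (Finset.card_insert_le _ _) ?_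
      simp
    omega
  set q0 := σ x₀ with hq0def
  set s0 := σ' x₀ with hs0def
  set r0 := σ s0 with hr0def
  have d_xq : x₀ ≠ q0 := Ne.symm (hσf x₀)
  have d_xs : x₀ ≠ s0 := Ne.symm (hσ'f x₀)
  have d_qs : q0 ≠ s0 := fun h => hne h.symm
  have d_xr : x₀ ≠ r0 := by
    intro h
    apply d_qs
    rw [hq0def, h, hr0def, hσi]
  have d_qr : q0 ≠ r0 := by
    intro h
    apply d_xs
    have h2 := congrArg σ h
    rw [hq0def, hσi, hr0def, hσi] at h2
    exact h2
  have d_sr : s0 ≠ r0 := Ne.symm (hσf s0)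
  have hq0f : q0 ∈ fib ω₀ := hmσ x₀ hx₀f
  have hs0f : s0 ∈ fib ω₀ := hmσ' x₀ hx₀f
  have hr0f : r0 ∈ fib ω₀ := hmσ s0 hs0f
  have hcard4 : ({x₀, q0, r0, s0} : Finset (Fin m)).card = 4 := by
    rw [Finset.card_insert_of_notMem (by simp [d_xq, d_xr, d_xs]),
      Finset.card_insert_of_notMem (by simp [d_qr, d_qs]),
      Finset.card_insert_of_notMem (by simp [d_sr.symm]), Finset.card_singleton]
  have hfib_eq : fib ω₀ = ({x₀, q0, r0, s0} : Finset (Fin m)) := by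
    refine (Finset.eq_of_subset_of_card_le ?_ ?_).symm
    · intro y hy
      simp only [Finset.mem_insert, Finset.mem_singleton] at hy
      rcases hy with rfl | rfl | rfl | rfl
      exacts [hx₀f, hq0f, hr0f, hs0f]
    · rw [hc4, hcard4]
  have hσ'q : σ' q0 = r0 := by
    have h1 : σ' q0 ∈ fib ω₀ := hmσ' q0 hq0f
    rw [hfib_eq] at h1
    simp only [Finset.mem_insert, Finset.mem_singleton] at h1
    rcases h1 with h1 | h1 | h1 | h1
    · exfalso
      apply d_qs
      have h2 := congrArg σ' h1
      rw [hσ'i] at h2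
      rw [hq0def] at h2 ⊢
      rw [h2, hs0def]
    · exact absurd h1 (hσ'f q0)
    · exact h1
    · exfalso
      apply d_xq
      have h2 := congrArg σ' h1
      rw [hσ'i, hs0def, hσ'i] at h2
      exact h2.symm
  have hσ'r : σ' r0 = q0 := by rw [← hσ'q, hσ'i]
  have hσ's : σ' s0 = x₀ := by rw [hs0def, hσ'i]
  have hσq0 : σ q0 = x₀ := by rw [hq0def, hσi]
  have hσr0 : σ r0 = s0 := by rw [hr0def, hσi]
  refine ⟨x₀, q0, r0, s0, d_xq, d_xr, d_xs, d_qr, d_qs, fun h => d_sr h.symm,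
    rfl, hσr0, ?_⟩
  ext i
  rw [Equiv.Perm.mul_apply, Equiv.Perm.mul_apply]
  by_cases hi : mk i = ω₀
  · have hif : i ∈ fib ω₀ := (hmemfib _ _).2 hi
    rw [hfib_eq] at hif
    simp only [Finset.mem_insert, Finset.mem_singleton] at hif
    rcases hif with h | h | h | h <;> rw [h]
    · rw [show σ x₀ = q0 from rfl, Equiv.swap_apply_left,
        Equiv.swap_apply_of_ne_of_ne (Ne.symm d_xs) d_sr]
    · rw [hσ'q, hσq0, Equiv.swap_apply_of_ne_of_ne d_xq d_xs, Equiv.swap_apply_left]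
    · rw [hσ'r, hσr0, Equiv.swap_apply_right,
        Equiv.swap_apply_of_ne_of_ne (Ne.symm d_xq) d_qr]
    · rw [hσ's, show σ s0 = r0 from rfl,
        Equiv.swap_apply_of_ne_of_ne (Ne.symm d_qr) (Ne.symm d_sr), Equiv.swap_apply_right]
  · have h2 : (fib (mk i)).card = 2 := hrest _ hi
    have hi1 : i ∈ fib (mk i) := (hmemfib _ _).2 rfl
    have hi2 : σ i ∈ fib (mk i) := (hmemfib _ _).2 (horb σ hσH i)
    have hi3 : σ' i ∈ fib (mk i) := (hmemfib _ _).2 (horb σ' hσ'H i)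
    have hsub2 : ({i, σ i} : Finset (Fin m)) ⊆ fib (mk i) := by
      intro y hy
      simp only [Finset.mem_insert, Finset.mem_singleton] at hy
      rcases hy with rfl | rfl
      exacts [hi1, hi2]
    have hcard2 : ({i, σ i} : Finset (Fin m)).card = 2 := by
      rw [Finset.card_insert_of_notMem (by simp [Ne.symm (hσf i)]), Finset.card_singleton]
    have hfeq : fib (mk i) = ({i, σ i} : Finset (Fin m)) :=
      (Finset.eq_of_subset_of_card_le hsub2 (by rw [h2, hcard2])).symm
    have hσ'val : σ' i = σ i := by
      rw [hfeq] at hi3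
      simp only [Finset.mem_insert, Finset.mem_singleton] at hi3
      rcases hi3 with h3 | h3
      · exact absurd h3 (hσ'f i)
      · exact h3
    have hdisj : ∀ y, y ∈ fib ω₀ → σ i ≠ y := by
      intro y hy hσiy
      apply hi
      rw [← horb σ hσH i, hσiy, (hmemfib _ _).1 hy]
    rw [hσ'val, Equiv.swap_apply_of_ne_of_ne (hdisj q0 hq0f) (hdisj s0 hs0f),
      Equiv.swap_apply_of_ne_of_ne (hdisj x₀ hx₀f) (hdisj r0 hr0f)]

end Surgery
end CLM

/-- If crossingless matchings `σ, σ'` of `2n` points meet in codimension one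
(`c(σ,σ') = n - 1`), then for any crossingless matching `τ` the codimension of
intersection changes by exactly one: `c(σ,τ) = c(σ',τ) ± 1`. -/
theorem numComponents_change_by_one {n : ℕ} (σ σ' τ : Equiv.Perm (Fin (2 * n)))
    (hσ : IsCrossinglessMatching σ) (hσ' : IsCrossinglessMatching σ')
    (hτ : IsCrossinglessMatching τ)
    (hcodim : numComponents σ σ' + 1 = n) :
    numComponents σ τ = numComponents σ' τ + 1 ∨
      numComponents σ' τ = numComponents σ τ + 1 := by
  have hcount : 2 * (numComponents σ σ' + 1) = 2 * n := by omega
  obtain ⟨p, q, r, s, h1, h2, h3, h4, h5, h6, hp, hr, hform⟩ :=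
    CLM.exists_surgery σ σ' hσ.1 hσ.2.1 hσ'.1 hσ'.2.1 hcount
  exact (CLM.surgery_step σ σ' τ hσ hσ' hτ p q r s h1 h2 h3 h4 h5 h6 hp hr hform).symm
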